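/- For all n ≥ 0, h₃(8n+3) = h₃(2n+1) + 4·h₃(n), where h₃(n) is the number of odd coefficients of (1+x+x^3)^n. -/

import Mathlib

open Polynomial

/-- The number of odd coefficients of a polynomial over ℤ. -/
noncomputable def oddCoeffCount (p : Polynomial ℤ) : ℕ :=
  (p.support.filter fun j => Odd (p.coeff j)).card

noncomputable def h3 (n : ℕ) : ℕ := oddCoeffCount ((1 + X + X ^ 3) ^ n)

namespace H3Aux

abbrev F := ZMod 2

lemma oddCoeffCount_eq (p : Polynomial ℤ) :
    oddCoeffCount p = (p.map (Int.castRingHom F)).support.card := by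
  unfold oddCoeffCount
  congr 1
  ext j
  have key : ∀ m : ℤ, ((m : F) ≠ 0) ↔ Odd m := by
    intro m
    rw [Ne, ZMod.intCast_zmod_eq_zero_iff_dvd, Int.odd_iff]
    push_cast
    omega
  simp only [Finset.mem_filter, mem_support_iff, coeff_map, eq_intCast]
  constructor
  · rintro ⟨_, ho⟩
    exact (key _).2 ho
  · intro hj
    have ho := (key _).1 hj
    refine ⟨fun h0 => ?_, ho⟩
    rw [h0] at ho
    simp [Int.odd_iff] at ho
  -- done

lemma h3_eq (n : ℕ) : h3 n = (((1 : F[X]) + X + X ^ 3) ^ n).support.card := by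
  rw [h3, oddCoeffCount_eq]
  congr 2
  simp [Polynomial.map_pow, Polynomial.map_add, Polynomial.map_one, Polynomial.map_pow]

lemma card_support_shift_expand (m a : ℕ) (hm : 0 < m) (u : F[X]) :
    ((X : F[X]) ^ a * expand F m u).support.card = u.support.card := by
  have hset : ((X : F[X]) ^ a * expand F m u).support
      = u.support.image (fun k => a + m * k) := by
    ext j
    simp only [mem_support_iff, Finset.mem_image, X_pow_mul, coeff_mul_X_pow',
      coeff_expand hm]
    constructor
    · intro hj
      split_ifs at hj with h1 h2
      · refine ⟨(j - a) / m, hj, ?_⟩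
        have h3 : m * ((j - a) / m) = j - a := Nat.mul_div_cancel' h2
        omega
      · exact absurd rfl hj
      · exact absurd rfl hj
    · rintro ⟨k, hk, rfl⟩
      rw [if_pos (Nat.le_add_right a (m * k))]
      have h4 : a + m * k - a = m * k := by omega
      rw [h4, if_pos (Dvd.intro k rfl)]
      rwa [Nat.mul_div_cancel_left k hm]
  rw [hset]
  apply Finset.card_image_of_injective
  intro x y hxy
  simp only at hxy
  exact Nat.eq_of_mul_eq_mul_left hm (by omega)

lemma mem_support_shift_expand {m a k : ℕ} (hm : 0 < m) {u : F[X]}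
    (hk : k ∈ ((X : F[X]) ^ a * expand F m u).support) : k % m = a % m := by
  rw [mem_support_iff, X_pow_mul, coeff_mul_X_pow'] at hk
  split_ifs at hk with h1
  · rw [coeff_expand hm] at hk
    split_ifs at hk with h2
    · obtain ⟨t, ht⟩ := h2
      have hkk : k = a + m * t := by omega
      rw [hkk, Nat.add_mul_mod_self_left]
    · exact absurd rfl hk
  · exact absurd rfl hk

lemma disj {m a b : ℕ} (hm : 0 < m) (hab : a % m ≠ b % m) (u v : F[X]) :
    Disjoint ((X : F[X]) ^ a * expand F m u).support
      ((X : F[X]) ^ b * expand F m v).support :=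
  Finset.disjoint_left.2 fun _ hk hk' =>
    hab ((mem_support_shift_expand hm hk).symm.trans (mem_support_shift_expand hm hk'))

lemma card_support_add (p q : F[X]) (h : Disjoint p.support q.support) :
    (p + q).support.card = p.support.card + q.support.card := by
  rw [← Finset.card_union_of_disjoint h]
  congr 1
  ext k
  simp only [mem_support_iff, coeff_add, Finset.mem_union]
  constructor
  · intro hk
    by_contra hc
    push_neg at hc
    rw [hc.1, hc.2, add_zero] at hk
    exact hk rfl
  · rintro (hk | hk)
    · have hq : q.coeff k = 0 :=
        notMem_support_iff.1 (Finset.disjoint_left.1 h (mem_support_iff.2 hk))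
      simpa [hq] using hk
    · have hp : p.coeff k = 0 :=
        notMem_support_iff.1 (Finset.disjoint_right.1 h (mem_support_iff.2 hk))
      simpa [hp] using hk

lemma disj_add {s : Finset ℕ} {p q : F[X]} (hp : Disjoint s p.support)
    (hq : Disjoint s q.support) : Disjoint s (p + q).support :=
  Disjoint.mono_right support_add (Finset.disjoint_union_right.2 ⟨hp, hq⟩)

lemma expand_two (g : F[X]) : expand F 2 g = g ^ 2 := by
  have h := Polynomial.map_frobenius_expand 2 g
  rwa [ZMod.frobenius_zmod, Polynomial.map_id] at h

lemma expand_eight (g : F[X]) : expand F 8 g = g ^ 8 := by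
  have h : expand F 2 (expand F 2 (expand F 2 g)) = expand F 8 g := by
    rw [expand_expand, expand_expand]
  rw [← h, expand_two, expand_two, expand_two]
  ring

lemma two_eq_zero : (2 : F[X]) = 0 := CharTwo.two_eq_zero

-- the key decompositions
lemma decomp2 (n : ℕ) :
    ((1 : F[X]) + X + X ^ 3) ^ (2 * n + 1)
      = X ^ 0 * expand F 2 (((1 : F[X]) + X + X ^ 3) ^ n)
        + X ^ 1 * expand F 2 ((1 + X) * ((1 : F[X]) + X + X ^ 3) ^ n) := by
  set f : F[X] := 1 + X + X ^ 3 with hf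
  have h1 : expand F 2 (f ^ n) = (f ^ n) ^ 2 := expand_two _
  have h2 : expand F 2 ((1 + X) * f ^ n) = (1 + X ^ 2) * (f ^ n) ^ 2 := by
    rw [map_mul, map_add, map_one, expand_X, h1]
  rw [h1, h2, pow_add, mul_comm 2 n, pow_mul]
  ring

lemma decomp8 (n : ℕ) :
    ((1 : F[X]) + X + X ^ 3) ^ (8 * n + 3)
      = X ^ 0 * expand F 8 (((1 : F[X]) + X + X ^ 3) ^ n)
        + (X ^ 2 * expand F 8 (((1 : F[X]) + X + X ^ 3) ^ n)
        + (X ^ 5 * expand F 8 (((1 : F[X]) + X + X ^ 3) ^ n)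
        + (X ^ 6 * expand F 8 (((1 : F[X]) + X + X ^ 3) ^ n)
        + (X ^ 7 * expand F 8 (((1 : F[X]) + X + X ^ 3) ^ n)
        + X ^ 1 * expand F 8 ((1 + X) * ((1 : F[X]) + X + X ^ 3) ^ n))))) := by
  set f : F[X] := 1 + X + X ^ 3 with hf
  have h1 : expand F 8 (f ^ n) = (f ^ n) ^ 8 := expand_eight _
  have h2 : expand F 8 ((1 + X) * f ^ n) = (1 + X ^ 8) * (f ^ n) ^ 8 := by
    rw [map_mul, map_add, map_one, expand_X, h1]
  rw [h1, h2, pow_add, mul_comm 8 n, pow_mul]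
  have h0 := two_eq_zero
  rw [hf]
  linear_combination ((X + X ^ 2 + 2 * X ^ 3 + 3 * X ^ 4 + X ^ 5 + X ^ 6 + X ^ 7 : F[X])
    * ((1 + X + X ^ 3 : F[X]) ^ n) ^ 8) * h0

end H3Aux

open H3Aux in
theorem stmt_9 : ∀ n : ℕ, h3 (8 * n + 3) = h3 (2 * n + 1) + 4 * h3 n := by
  intro n
  set g : F[X] := ((1 : F[X]) + X + X ^ 3) ^ n with hg
  set q : F[X] := (1 + X) * g with hq
  have hwg : ∀ a : ℕ, ((X : F[X]) ^ a * expand F 8 g).support.card = g.support.card :=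
    fun a => card_support_shift_expand 8 a (by norm_num) g
  have hwq8 : ((X : F[X]) ^ 1 * expand F 8 q).support.card = q.support.card :=
    card_support_shift_expand 8 1 (by norm_num) q
  -- h3 (8n+3)
  have e8 : h3 (8 * n + 3) = 5 * g.support.card + q.support.card := by
    rw [h3_eq, decomp8 n]
    have d01 : Disjoint ((X : F[X]) ^ 0 * expand F 8 g).support
        ((X : F[X]) ^ 2 * expand F 8 g).support := disj (by norm_num) (by norm_num) _ _
    rw [card_support_add _ _ (disj_add (disj (by norm_num : (0:ℕ) < 8) (by norm_num) g g)
      (disj_add (disj (by norm_num) (by norm_num) g g)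
      (disj_add (disj (by norm_num) (by norm_num) g g)
      (disj_add (disj (by norm_num) (by norm_num) g g)
      (disj (by norm_num) (by norm_num) g q)))))]
    rw [card_support_add _ _ (disj_add (disj (by norm_num : (0:ℕ) < 8) (by norm_num) g g)
      (disj_add (disj (by norm_num) (by norm_num) g g)
      (disj_add (disj (by norm_num) (by norm_num) g g)
      (disj (by norm_num) (by norm_num) g q))))]
    rw [card_support_add _ _ (disj_add (disj (by norm_num : (0:ℕ) < 8) (by norm_num) g g)
      (disj_add (disj (by norm_num) (by norm_num) g g)
      (disj (by norm_num) (by norm_num) g q)))]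
    rw [card_support_add _ _ (disj_add (disj (by norm_num : (0:ℕ) < 8) (by norm_num) g g)
      (disj (by norm_num) (by norm_num) g q))]
    rw [card_support_add _ _ (disj (by norm_num : (0:ℕ) < 8) (by norm_num) g q)]
    rw [hwg 0, hwg 2, hwg 5, hwg 6, hwg 7, hwq8]
    ring
  have e2 : h3 (2 * n + 1) = g.support.card + q.support.card := by
    rw [h3_eq, decomp2 n]
    rw [card_support_add _ _ (disj (by norm_num : (0:ℕ) < 2) (by norm_num) g q)]
    rw [card_support_shift_expand 2 0 (by norm_num) g,
      card_support_shift_expand 2 1 (by norm_num) q]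
  have e1 : h3 n = g.support.card := h3_eq n
  rw [e8, e2, e1]
  ring
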